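/- arXiv:0902.0841 — 2 statements merged into one kernel-verified Lean document; each statement's English description precedes it below -/
import Mathlib

section
/- ḡ(3) = 2: there exists a correct adaptive sorting strategy of depth 2 in the two-unknown-weights model on 3 coins, but there is no correct adaptive sorting strategy of depth 1 on 3 coins (the case n = 3 of Lemma 3, together with the information-theoretic lower bound, since 2^3 − 1 = 7 > 3). -/
/-!
Adaptive sorting model with two unknown weights and no reference coins.
Coins are the elements of `Fin n`; an unknown heavy set `H : Finset (Fin n)`
is fixed (`H = ∅` and `H = univ` both mean that all coins weigh the same).
A weighing is a pair `(L, R)` of disjoint subsets of `Fin n` with `|L| = |R|`,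
and its outcome is the three-valued comparison of `|L ∩ H|` and `|R ∩ H|`.
-/

/-- Outcome of weighing pans `L` and `R` when the heavy set is `H`. -/
def weighOutcome {n : ℕ} (L R H : Finset (Fin n)) : Ordering :=
  compare (L ∩ H).card (R ∩ H).card

/-- The outcome sequence produced by heavy set `H` after `k` weighings of the
adaptive strategy `weigh` (which assigns a weighing to each outcome history). -/
def runList {n : ℕ} (weigh : List Ordering → Finset (Fin n) × Finset (Fin n))
    (H : Finset (Fin n)) : ℕ → List Ordering
  | 0 => []
  | k + 1 =>
    let σ := runList weigh H k
    σ ++ [weighOutcome (weigh σ).1 (weigh σ).2 H]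

/-- `(weigh, answer)` is a correct adaptive sorting strategy of depth `k` on
`n` coins in the two-unknown-weights model: every prescribed weighing has
disjoint pans of equal size, and for every heavy set `H` the answer at the
outcome sequence produced by `H` equals `H`, except that when `H` is `∅` or
`univ` it suffices that the answer be `∅` or `univ`. -/
def IsCorrectSorting (n k : ℕ)
    (weigh : List Ordering → Finset (Fin n) × Finset (Fin n))
    (answer : List Ordering → Finset (Fin n)) : Prop :=
  (∀ σ : List Ordering, σ.length < k →
      Disjoint (weigh σ).1 (weigh σ).2 ∧ (weigh σ).1.card = (weigh σ).2.card) ∧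
  (∀ H : Finset (Fin n),
      ((H = ∅ ∨ H = Finset.univ) →
        (answer (runList weigh H k) = ∅ ∨ answer (runList weigh H k) = Finset.univ)) ∧
      (H ≠ ∅ → H ≠ Finset.univ → answer (runList weigh H k) = H))

/-- There is a correct adaptive sorting strategy of depth `k` on `n` coins. -/
def HasSorting (n k : ℕ) : Prop :=
  ∃ weigh answer, IsCorrectSorting n k weigh answer

/-- `ḡ n` is the least number of weighings sufficient to sort `n` coins of two
possible distinct weights by a balance. -/
noncomputable def gbar (n : ℕ) : ℕ := sInf {k | HasSorting n k}

def Wstrat : List Ordering → Finset (Fin 3) × Finset (Fin 3)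
  | [] => ({0}, {1})
  | Ordering.lt :: _ => ({1}, {2})
  | _ :: _ => ({0}, {2})

def Astrat : List Ordering → Finset (Fin 3)
  | [Ordering.gt, Ordering.gt] => {0}
  | [Ordering.gt, Ordering.eq] => {0, 2}
  | [Ordering.lt, Ordering.gt] => {1}
  | [Ordering.lt, Ordering.eq] => {1, 2}
  | [Ordering.eq, Ordering.lt] => {2}
  | [Ordering.eq, Ordering.gt] => {0, 1}
  | _ => ∅

theorem has32 : HasSorting 3 2 := by
  refine ⟨Wstrat, Astrat, ?_, ?_⟩
  · intro σ _
    rcases σ with _ | ⟨o, rest⟩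
    · decide
    · cases o <;> refine ⟨?_, ?_⟩ <;> simp only [Wstrat] <;> decide
  · decide

theorem no31 : ¬ HasSorting 3 1 := by
  rintro ⟨w, a, hw, hH⟩
  obtain ⟨hdisj, hcard⟩ := hw [] (by simp)
  set L := (w []).1 with hL
  set R := (w []).2 with hR
  have hrun : ∀ H : Finset (Fin 3), runList w H 1 = [weighOutcome L R H] := fun H => rfl
  have hU : (L ∪ R).card = L.card + R.card := Finset.card_union_of_disjoint hdisj
  have hle : (L ∪ R).card ≤ 3 := le_trans (Finset.card_le_univ _) (by simp)
  have hL1 : L.card ≤ 1 := by omega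
  rcases Nat.lt_or_ge L.card 1 with h0 | h1
  · -- L = R = ∅ : every outcome is eq
    have hLe : L = ∅ := Finset.card_eq_zero.mp (by omega)
    have hRe : R = ∅ := Finset.card_eq_zero.mp (by omega)
    have e1 := (hH {0}).2 (by decide) (by decide)
    have e2 := (hH {1}).2 (by decide) (by decide)
    rw [hrun, weighOutcome, hLe, hRe] at e1 e2
    simp at e1 e2
    rw [e1] at e2
    exact absurd e2 (by decide)
  · -- L.card = 1 : H1 = L ∪ R and H2 = (L ∪ R)ᶜ both give outcome eq
    have hc1 : L.card = 1 := le_antisymm hL1 h1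
    have hUc : (L ∪ R).card = 2 := by omega
    have hCc : (L ∪ R)ᶜ.card = 1 := by
      rw [Finset.card_compl]; simp [hUc]
    have o1 : weighOutcome L R (L ∪ R) = Ordering.eq := by
      rw [weighOutcome, Finset.inter_eq_left.mpr Finset.subset_union_left,
        Finset.inter_eq_left.mpr Finset.subset_union_right, hcard]
      simp [Nat.compare_eq_eq]
    have o2 : weighOutcome L R (L ∪ R)ᶜ = Ordering.eq := by
      have d1 : L ∩ (L ∪ R)ᶜ = ∅ := Finset.disjoint_iff_inter_eq_empty.mp
        (Disjoint.mono_left Finset.subset_union_left disjoint_compl_right)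
      have d2 : R ∩ (L ∪ R)ᶜ = ∅ := Finset.disjoint_iff_inter_eq_empty.mp
        (Disjoint.mono_left Finset.subset_union_right disjoint_compl_right)
      rw [weighOutcome, d1, d2]
      simp [Nat.compare_eq_eq]
    have e1 := (hH (L ∪ R)).2 (by intro h; rw [h] at hUc; simp at hUc)
      (by intro h; rw [h] at hUc; simp at hUc)
    have e2 := (hH (L ∪ R)ᶜ).2 (by intro h; rw [h] at hCc; simp at hCc)
      (by intro h; rw [h] at hCc; simp at hCc)
    rw [hrun, o1] at e1
    rw [hrun, o2] at e2
    rw [e1] at e2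
    have := congrArg Finset.card e2
    rw [hUc, hCc] at this
    exact absurd this (by decide)

theorem no30 : ¬ HasSorting 3 0 := by
  rintro ⟨w, a, _, hH⟩
  have e1 := (hH {0}).2 (by decide) (by decide)
  have e2 := (hH {1}).2 (by decide) (by decide)
  rw [show runList w {0} 0 = [] from rfl] at e1
  rw [show runList w {1} 0 = [] from rfl] at e2
  rw [e1] at e2
  exact absurd e2 (by decide)


/-- **`ḡ 3 = 2`.** There is a correct adaptive sorting strategy of depth `2`
on `3` coins, but none of depth `1`. -/
theorem gbar_three_eq_two :
    HasSorting 3 2 ∧ ¬ HasSorting 3 1 ∧ gbar 3 = 2 := by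
  refine ⟨has32, no31, ?_⟩
  apply le_antisymm
  · exact Nat.sInf_le has32
  · refine le_csInf ⟨2, has32⟩ ?_
    intro k hk
    by_contra h
    interval_cases k
    · exact no30 hk
    · exact no31 hk
end

section
/- There exists a correct adaptive sorting strategy of depth 4 in the two-unknown-weights model on 6 coins with the additional property that whether all coins have the same weight is already detected by the third weighing; precisely, for every heavy set H ⊆ Fin 6 with H ≠ ∅ and H ≠ Fin 6, at least one of the first 3 outcomes produced by H is not 'equal' (the explicitly constructed n = 6 algorithm from which Lemma 3 is derived). -/
def w6 : List Ordering → Finset (Fin 6) × Finset (Fin 6)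
  | [] => ({0,1}, {2,3})
  | [Ordering.lt] => ({0,2}, {1,3})
  | [Ordering.lt, Ordering.lt] => ({1,2}, {4,5})
  | [Ordering.lt, Ordering.lt, Ordering.lt] => ({4}, {5})
  | [Ordering.lt, Ordering.lt, Ordering.eq] => ({0}, {1})
  | [Ordering.lt, Ordering.lt, Ordering.gt] => ({4}, {5})
  | [Ordering.lt, Ordering.eq] => ({0}, {4})
  | [Ordering.lt, Ordering.eq, Ordering.lt] => ({0}, {5})
  | [Ordering.lt, Ordering.eq, Ordering.eq] => ({0}, {5})
  | [Ordering.lt, Ordering.gt] => ({0,3}, {4,5})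
  | [Ordering.lt, Ordering.gt, Ordering.lt] => ({4}, {5})
  | [Ordering.lt, Ordering.gt, Ordering.eq] => ({0}, {1})
  | [Ordering.lt, Ordering.gt, Ordering.gt] => ({4}, {5})
  | [Ordering.eq] => ({0}, {1})
  | [Ordering.eq, Ordering.lt] => ({2,4}, {3,5})
  | [Ordering.eq, Ordering.lt, Ordering.lt] => ({0,1}, {4,5})
  | [Ordering.eq, Ordering.lt, Ordering.eq] => ({0}, {2})
  | [Ordering.eq, Ordering.lt, Ordering.gt] => ({0,1}, {4,5})
  | [Ordering.eq, Ordering.eq] => ({0,1}, {4,5})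
  | [Ordering.eq, Ordering.eq, Ordering.lt] => ({4}, {5})
  | [Ordering.eq, Ordering.eq, Ordering.gt] => ({4}, {5})
  | [Ordering.eq, Ordering.gt] => ({2,4}, {3,5})
  | [Ordering.eq, Ordering.gt, Ordering.lt] => ({0,1}, {4,5})
  | [Ordering.eq, Ordering.gt, Ordering.eq] => ({0}, {2})
  | [Ordering.eq, Ordering.gt, Ordering.gt] => ({0,1}, {4,5})
  | [Ordering.gt] => ({0,2}, {1,3})
  | [Ordering.gt, Ordering.lt] => ({0,3}, {4,5})
  | [Ordering.gt, Ordering.lt, Ordering.lt] => ({4}, {5})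
  | [Ordering.gt, Ordering.lt, Ordering.eq] => ({0}, {1})
  | [Ordering.gt, Ordering.lt, Ordering.gt] => ({4}, {5})
  | [Ordering.gt, Ordering.eq] => ({0}, {4})
  | [Ordering.gt, Ordering.eq, Ordering.eq] => ({0}, {5})
  | [Ordering.gt, Ordering.eq, Ordering.gt] => ({0}, {5})
  | [Ordering.gt, Ordering.gt] => ({1,2}, {4,5})
  | [Ordering.gt, Ordering.gt, Ordering.lt] => ({4}, {5})
  | [Ordering.gt, Ordering.gt, Ordering.eq] => ({0}, {1})
  | [Ordering.gt, Ordering.gt, Ordering.gt] => ({4}, {5})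
  | _ => ({0,1}, {2,3})

def a6 : List Ordering → Finset (Fin 6)
  | [Ordering.gt, Ordering.gt, Ordering.eq, Ordering.gt] => {0}
  | [Ordering.gt, Ordering.lt, Ordering.eq, Ordering.lt] => {1}
  | [Ordering.lt, Ordering.gt, Ordering.eq, Ordering.eq] => {2}
  | [Ordering.lt, Ordering.lt, Ordering.eq, Ordering.eq] => {3}
  | [Ordering.eq, Ordering.eq, Ordering.lt, Ordering.gt] => {4}
  | [Ordering.eq, Ordering.eq, Ordering.lt, Ordering.lt] => {5}
  | [Ordering.gt, Ordering.eq, Ordering.gt, Ordering.gt] => {0,1}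
  | [Ordering.eq, Ordering.gt, Ordering.gt, Ordering.gt] => {0,2}
  | [Ordering.eq, Ordering.gt, Ordering.lt, Ordering.gt] => {0,3}
  | [Ordering.gt, Ordering.gt, Ordering.lt, Ordering.gt] => {0,4}
  | [Ordering.gt, Ordering.gt, Ordering.lt, Ordering.lt] => {0,5}
  | [Ordering.eq, Ordering.lt, Ordering.gt, Ordering.gt] => {1,2}
  | [Ordering.eq, Ordering.lt, Ordering.lt, Ordering.gt] => {1,3}
  | [Ordering.gt, Ordering.lt, Ordering.lt, Ordering.gt] => {1,4}
  | [Ordering.gt, Ordering.lt, Ordering.lt, Ordering.lt] => {1,5}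
  | [Ordering.lt, Ordering.eq, Ordering.eq, Ordering.eq] => {2,3}
  | [Ordering.lt, Ordering.gt, Ordering.lt, Ordering.gt] => {2,4}
  | [Ordering.lt, Ordering.gt, Ordering.lt, Ordering.lt] => {2,5}
  | [Ordering.lt, Ordering.lt, Ordering.lt, Ordering.gt] => {3,4}
  | [Ordering.lt, Ordering.lt, Ordering.lt, Ordering.lt] => {3,5}
  | [Ordering.eq, Ordering.eq, Ordering.lt, Ordering.eq] => {4,5}
  | [Ordering.gt, Ordering.gt, Ordering.gt, Ordering.eq] => {0,1,2}
  | [Ordering.gt, Ordering.lt, Ordering.gt, Ordering.eq] => {0,1,3}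
  | [Ordering.gt, Ordering.eq, Ordering.eq, Ordering.gt] => {0,1,4}
  | [Ordering.gt, Ordering.eq, Ordering.gt, Ordering.eq] => {0,1,5}
  | [Ordering.lt, Ordering.gt, Ordering.gt, Ordering.eq] => {0,2,3}
  | [Ordering.eq, Ordering.gt, Ordering.gt, Ordering.eq] => {0,2,4}
  | [Ordering.eq, Ordering.gt, Ordering.eq, Ordering.eq] => {0,2,5}
  | [Ordering.eq, Ordering.gt, Ordering.eq, Ordering.gt] => {0,3,4}
  | [Ordering.eq, Ordering.gt, Ordering.lt, Ordering.eq] => {0,3,5}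
  | [Ordering.gt, Ordering.gt, Ordering.lt, Ordering.eq] => {0,4,5}
  | [Ordering.lt, Ordering.lt, Ordering.gt, Ordering.eq] => {1,2,3}
  | [Ordering.eq, Ordering.lt, Ordering.gt, Ordering.eq] => {1,2,4}
  | [Ordering.eq, Ordering.lt, Ordering.eq, Ordering.lt] => {1,2,5}
  | [Ordering.eq, Ordering.lt, Ordering.eq, Ordering.eq] => {1,3,4}
  | [Ordering.eq, Ordering.lt, Ordering.lt, Ordering.eq] => {1,3,5}
  | [Ordering.gt, Ordering.lt, Ordering.lt, Ordering.eq] => {1,4,5}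
  | [Ordering.lt, Ordering.eq, Ordering.lt, Ordering.eq] => {2,3,4}
  | [Ordering.lt, Ordering.eq, Ordering.eq, Ordering.lt] => {2,3,5}
  | [Ordering.lt, Ordering.gt, Ordering.lt, Ordering.eq] => {2,4,5}
  | [Ordering.lt, Ordering.lt, Ordering.lt, Ordering.eq] => {3,4,5}
  | [Ordering.eq, Ordering.eq, Ordering.gt, Ordering.eq] => {0,1,2,3}
  | [Ordering.gt, Ordering.gt, Ordering.gt, Ordering.gt] => {0,1,2,4}
  | [Ordering.gt, Ordering.gt, Ordering.gt, Ordering.lt] => {0,1,2,5}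
  | [Ordering.gt, Ordering.lt, Ordering.gt, Ordering.gt] => {0,1,3,4}
  | [Ordering.gt, Ordering.lt, Ordering.gt, Ordering.lt] => {0,1,3,5}
  | [Ordering.gt, Ordering.eq, Ordering.eq, Ordering.eq] => {0,1,4,5}
  | [Ordering.lt, Ordering.gt, Ordering.gt, Ordering.gt] => {0,2,3,4}
  | [Ordering.lt, Ordering.gt, Ordering.gt, Ordering.lt] => {0,2,3,5}
  | [Ordering.eq, Ordering.gt, Ordering.gt, Ordering.lt] => {0,2,4,5}
  | [Ordering.eq, Ordering.gt, Ordering.lt, Ordering.lt] => {0,3,4,5}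
  | [Ordering.lt, Ordering.lt, Ordering.gt, Ordering.gt] => {1,2,3,4}
  | [Ordering.lt, Ordering.lt, Ordering.gt, Ordering.lt] => {1,2,3,5}
  | [Ordering.eq, Ordering.lt, Ordering.gt, Ordering.lt] => {1,2,4,5}
  | [Ordering.eq, Ordering.lt, Ordering.lt, Ordering.lt] => {1,3,4,5}
  | [Ordering.lt, Ordering.eq, Ordering.lt, Ordering.lt] => {2,3,4,5}
  | [Ordering.eq, Ordering.eq, Ordering.gt, Ordering.gt] => {0,1,2,3,4}
  | [Ordering.eq, Ordering.eq, Ordering.gt, Ordering.lt] => {0,1,2,3,5}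
  | [Ordering.gt, Ordering.gt, Ordering.eq, Ordering.eq] => {0,1,2,4,5}
  | [Ordering.gt, Ordering.lt, Ordering.eq, Ordering.eq] => {0,1,3,4,5}
  | [Ordering.lt, Ordering.gt, Ordering.eq, Ordering.gt] => {0,2,3,4,5}
  | [Ordering.lt, Ordering.lt, Ordering.eq, Ordering.lt] => {1,2,3,4,5}
  | _ => ∅

/-- **The `n = 6` algorithm of Lemma 3.** There is a correct adaptive sorting
strategy of depth `4` on `6` coins such that whether all coins have the same
weight is already detected by the third weighing: for every heavy set `H`
other than `∅` and `univ`, one of the first `3` outcomes produced by `H` is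
not `eq`. -/
theorem sort_six_in_four_detect_three :
    ∃ (weigh : List Ordering → Finset (Fin 6) × Finset (Fin 6))
      (answer : List Ordering → Finset (Fin 6)),
      IsCorrectSorting 6 4 weigh answer ∧
      ∀ H : Finset (Fin 6), H ≠ ∅ → H ≠ Finset.univ →
        ∃ o ∈ runList weigh H 3, o ≠ Ordering.eq := by
  refine ⟨w6, a6, ⟨?_, ?_⟩, ?_⟩
  · intro σ h
    rcases σ with _ | ⟨a, _ | ⟨b, _ | ⟨c, _ | ⟨d, t⟩⟩⟩⟩
    · decide
    · cases a <;> decide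
    · cases a <;> cases b <;> decide
    · cases a <;> cases b <;> cases c <;> decide
    · simp [List.length] at h; omega
  · decide
  · decide
end
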